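/- For any DAG G in which i₂* ∉ P(i₁*), writing the 2-influential set as {i_1, …, i_m} in decreasing rank order with i_1 = i₁* and i_2 = i₂* and m ≥ 3, either (i_3 ∈ P(i_1) and i_{t+1} ∈ P(i_t) for all 3 ≤ t < m) or (i_3 ∈ P(i_2) and i_{t+1} ∈ P(i_t) for all 3 ≤ t < m). -/

import Mathlib

attribute [local instance] Classical.propDecidable

/-- The progeny of node `i`: all nodes with a directed path to `i`, including `i`. -/
noncomputable def progeny {n : ℕ} (E : Finset (Fin n × Fin n)) (i : Fin n) : Finset (Fin n) :=
  Finset.univ.filter (fun j => Relation.ReflTransGen (fun u v => (u, v) ∈ E) j i)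

/-- The graph is acyclic. -/
def Acyclic {n : ℕ} (E : Finset (Fin n × Fin n)) : Prop :=
  ∀ i : Fin n, ¬ Relation.TransGen (fun u v => (u, v) ∈ E) i i

/-- `Prec E i j` means `i ≻ j` : larger progeny, ties broken by larger index. -/
def Prec {n : ℕ} (E : Finset (Fin n × Fin n)) (i j : Fin n) : Prop :=
  (progeny E j).card < (progeny E i).card ∨
    ((progeny E j).card = (progeny E i).card ∧ j < i)

/-- Delete all out-edges of node `i`. -/
noncomputable def delOut {n : ℕ} (E : Finset (Fin n × Fin n)) (i : Fin n) :
    Finset (Fin n × Fin n) := E.filter (fun e => e.1 ≠ i)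

/-- `i` is in the `k`-influential set: fewer than `k` nodes outrank `i`
after `i` deletes all her out-edges. -/
noncomputable def Influential {n : ℕ} (k : ℕ) (E : Finset (Fin n × Fin n)) (i : Fin n) : Prop :=
  (Finset.univ.filter (fun j => Prec (delOut E i) j i)).card < k

section Aux
variable {n : ℕ} (E : Finset (Fin n × Fin n))

lemma mem_progeny {i j : Fin n} :
    j ∈ progeny E i ↔ Relation.ReflTransGen (fun u v => (u, v) ∈ E) j i := by
  simp [progeny]

lemma self_mem_progeny (i : Fin n) : i ∈ progeny E i :=
  (mem_progeny E).mpr .refl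

lemma progeny_mono {i j : Fin n} (h : j ∈ progeny E i) : progeny E j ⊆ progeny E i := by
  intro k hk
  rw [mem_progeny] at *
  exact hk.trans h

lemma progeny_delOut_subset (i j : Fin n) : progeny (delOut E i) j ⊆ progeny E j := by
  intro k hk
  rw [mem_progeny] at *
  exact Relation.ReflTransGen.mono (fun u v h => (Finset.mem_filter.mp h).1) _ _ hk

lemma reach_delOut_self {i : Fin n} (hE : Acyclic E) :
    ∀ {u : Fin n}, Relation.ReflTransGen (fun a b => (a, b) ∈ E) u i →
      Relation.ReflTransGen (fun a b => (a, b) ∈ delOut E i) u i := by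
  intro u h
  induction h using Relation.ReflTransGen.head_induction_on with
  | refl => exact .refl
  | head hab hbw ih =>
    rename_i a b
    have ha : a ≠ i := fun h' => hE i (by subst h'; exact Relation.TransGen.head' hab hbw)
    exact .head (Finset.mem_filter.mpr ⟨hab, ha⟩) ih

lemma reach_avoid {i j : Fin n}
    (hij : ¬ Relation.ReflTransGen (fun a b => (a, b) ∈ E) i j) :
    ∀ {u : Fin n}, Relation.ReflTransGen (fun a b => (a, b) ∈ E) u j →
      Relation.ReflTransGen (fun a b => (a, b) ∈ delOut E i) u j := by
  intro u h
  induction h using Relation.ReflTransGen.head_induction_on with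
  | refl => exact .refl
  | head hab hbw ih =>
    rename_i a b
    have ha : a ≠ i := fun h' => hij (by subst h'; exact Relation.ReflTransGen.head hab hbw)
    exact .head (Finset.mem_filter.mpr ⟨hab, ha⟩) ih

lemma reach_avoid' {i w : Fin n} :
    ∀ {u : Fin n}, Relation.ReflTransGen (fun a b => (a, b) ∈ E) u w →
      ¬ Relation.ReflTransGen (fun a b => (a, b) ∈ E) u i →
      Relation.ReflTransGen (fun a b => (a, b) ∈ delOut E i) u w := by
  intro u h
  induction h using Relation.ReflTransGen.head_induction_on with
  | refl => exact fun _ => .refl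
  | head hab hbw ih =>
    intro hni
    rename_i a b
    have ha : a ≠ i := fun h' => hni (by subst h'; exact Relation.ReflTransGen.refl)
    have hb : ¬ Relation.ReflTransGen (fun a b => (a, b) ∈ E) b i :=
      fun h' => hni (Relation.ReflTransGen.head hab h')
    exact .head (Finset.mem_filter.mpr ⟨hab, ha⟩) (ih hb)

lemma progeny_delOut_self {i : Fin n} (hE : Acyclic E) :
    progeny (delOut E i) i = progeny E i := by
  refine Finset.Subset.antisymm (progeny_delOut_subset E i i) ?_
  intro k hk
  rw [mem_progeny] at *
  exact reach_delOut_self E hE hk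

lemma progeny_delOut_of_not_mem {i j : Fin n} (h : i ∉ progeny E j) :
    progeny (delOut E i) j = progeny E j := by
  refine Finset.Subset.antisymm (progeny_delOut_subset E i j) ?_
  intro k hk
  rw [mem_progeny] at *
  exact reach_avoid E h hk

lemma prec_irrefl {i : Fin n} : ¬ Prec E i i := by
  rintro (h | ⟨_, h⟩) <;> exact absurd h (lt_irrefl _)

lemma not_influential_of_two {i a b : Fin n} (hab : a ≠ b)
    (ha : Prec (delOut E i) a i) (hb : Prec (delOut E i) b i) :
    ¬ Influential 2 E i := by
  unfold Influential
  push_neg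
  have hsub : ({a, b} : Finset (Fin n)) ⊆
      Finset.univ.filter (fun j => Prec (delOut E i) j i) := by
    intro x hx
    simp only [Finset.mem_insert, Finset.mem_singleton] at hx
    rcases hx with rfl | rfl <;> simp [Finset.mem_filter, ha, hb]
  calc (2 : ℕ) = ({a, b} : Finset (Fin n)).card := by
        rw [Finset.card_insert_of_notMem (by simpa using hab), Finset.card_singleton]
    _ ≤ _ := Finset.card_le_card hsub

lemma influential_mem (hE : Acyclic E) {i1 i2 i : Fin n}
    (hi1 : Prec E i1 i) (hi2 : Prec E i2 i) (h12 : i1 ≠ i2)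
    (hinf : Influential 2 E i) :
    i ∈ progeny E i1 ∨ i ∈ progeny E i2 := by
  by_contra h
  push_neg at h
  obtain ⟨h1, h2⟩ := h
  have e1 := progeny_delOut_of_not_mem E h1
  have e2 := progeny_delOut_of_not_mem E h2
  have ei := progeny_delOut_self E (i := i) hE
  refine not_influential_of_two E h12 ?_ ?_ hinf
  · unfold Prec; rw [e1, ei]; exact hi1
  · unfold Prec; rw [e2, ei]; exact hi2

lemma chain_step (hE : Acyclic E) {i j w : Fin n}
    (hjwne : j ≠ w)
    (hji : Prec E j i) (hwi : Prec E w i)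
    (hjw : j ∈ progeny E w)
    (hinf : Influential 2 E i) :
    i ∈ progeny E j := by
  by_contra hij
  have ei := progeny_delOut_self E (i := i) hE
  have hji' : j ∉ progeny E i := by
    intro hmem
    have hsub := progeny_mono E hmem
    have hc := Finset.card_le_card hsub
    rcases hji with hlt | ⟨heq, _⟩
    · omega
    · have hset := Finset.eq_of_subset_of_card_le hsub (le_of_eq heq)
      rw [hset] at hij
      exact hij (self_mem_progeny E i)
  have ej : progeny (delOut E i) j = progeny E j :=
    progeny_delOut_of_not_mem E hij
  have hjw' : j ∈ progeny (delOut E i) w := by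
    rw [mem_progeny] at hjw ⊢
    exact reach_avoid' E hjw (fun h' => hji' ((mem_progeny E).mpr h'))
  have hsub : progeny E j ⊆ progeny (delOut E i) w := by
    rw [← ej]; exact progeny_mono (delOut E i) hjw'
  have hcard : (progeny E j).card ≤ (progeny (delOut E i) w).card :=
    Finset.card_le_card hsub
  have Pj : Prec (delOut E i) j i := by
    unfold Prec; rw [ej, ei]; exact hji
  have Pw : Prec (delOut E i) w i := by
    unfold Prec; rw [ei]
    rcases hji with hlt | ⟨heq, hijlt⟩
    · left; omega
    · rcases lt_or_eq_of_le hcard with h' | h'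
      · left; omega
      · have hset : progeny E j = progeny (delOut E i) w :=
          Finset.eq_of_subset_of_card_le hsub (le_of_eq h'.symm)
        have hwj : w ∈ progeny E j := by
          rw [hset]
          exact self_mem_progeny (delOut E i) w
        have hc2 := Finset.card_le_card (progeny_mono E hwj)
        rcases hwi with hlt2 | ⟨heq2, hiw⟩
        · exact absurd hlt2 (by omega)
        · exact Or.inr ⟨by omega, hiw⟩
  exact not_influential_of_two E hjwne Pj Pw hinf

end Aux

/-- if i₂* ∉ P(i₁*) and the 2-influential set ordered decreasingly is
i₁ = i₁*, i₂ = i₂*, i₃, …, i_m with m ≥ 3, then either i₃ ∈ P(i₁) or i₃ ∈ P(i₂), and in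
either case i_{t+1} ∈ P(i_t) for all 3 ≤ t < m. -/
theorem stmt11 {n m : ℕ} (hn : 2 ≤ n) (E : Finset (Fin n × Fin n)) (hE : Acyclic E)
    (i1 i2 : Fin n) (h12 : i1 ≠ i2)
    (hi1 : ∀ j : Fin n, j ≠ i1 → Prec E i1 j)
    (hi2 : ∀ j : Fin n, j ≠ i1 → j ≠ i2 → Prec E i2 j)
    (h2not : i2 ∉ progeny E i1)
    (hm : 3 ≤ m) (f : Fin m → Fin n)
    (henum : ∀ i : Fin n, Influential 2 E i ↔ ∃ t : Fin m, f t = i)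
    (hord : ∀ t s : Fin m, t < s → Prec E (f t) (f s))
    (hf0 : f ⟨0, by omega⟩ = i1) (hf1 : f ⟨1, by omega⟩ = i2) :
    (f ⟨2, by omega⟩ ∈ progeny E i1 ∧
      ∀ t : Fin m, 2 ≤ (t : ℕ) → ∀ h : (t : ℕ) + 1 < m,
        f ⟨(t : ℕ) + 1, h⟩ ∈ progeny E (f t)) ∨
    (f ⟨2, by omega⟩ ∈ progeny E i2 ∧
      ∀ t : Fin m, 2 ≤ (t : ℕ) → ∀ h : (t : ℕ) + 1 < m,
        f ⟨(t : ℕ) + 1, h⟩ ∈ progeny E (f t)) := by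
  have hinf : ∀ t : Fin m, Influential 2 E (f t) := fun t => (henum (f t)).mpr ⟨t, rfl⟩
  have hfne : ∀ t s : Fin m, t < s → f t ≠ f s := by
    intro t s hts heq
    exact prec_irrefl E (heq ▸ hord t s hts)
  have hne1 : ∀ t : Fin m, 2 ≤ (t : ℕ) → f t ≠ i1 := by
    intro t ht heq
    have h0 : (⟨0, by omega⟩ : Fin m) < t := by
      rw [Fin.lt_def]; simpa using by omega
    exact hfne _ _ h0 (hf0.trans heq.symm)
  have hne2 : ∀ t : Fin m, 2 ≤ (t : ℕ) → f t ≠ i2 := by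
    intro t ht heq
    have h0 : (⟨1, by omega⟩ : Fin m) < t := by
      rw [Fin.lt_def]; simpa using by omega
    exact hfne _ _ h0 (hf1.trans heq.symm)
  have hchain : ∀ t : Fin m, 2 ≤ (t : ℕ) → ∀ h : (t : ℕ) + 1 < m,
      f ⟨(t : ℕ) + 1, h⟩ ∈ progeny E (f t) := by
    intro t ht h
    set s : Fin m := ⟨(t : ℕ) + 1, h⟩ with hs
    have hts : t < s := by rw [Fin.lt_def]; simp [hs]
    have hPji : Prec E (f t) (f s) := hord t s hts
    have hsne1 : f s ≠ i1 := hne1 s (by simp [hs]; omega)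
    have hsne2 : f s ≠ i2 := hne2 s (by simp [hs]; omega)
    have htne1 : f t ≠ i1 := hne1 t ht
    have htne2 : f t ≠ i2 := hne2 t ht
    have hwi1 : Prec E i1 (f s) := hi1 _ hsne1
    have hwi2 : Prec E i2 (f s) := hi2 _ hsne1 hsne2
    rcases influential_mem E hE (hi1 _ htne1) (hi2 _ htne1 htne2) h12 (hinf t) with hmem | hmem
    · exact chain_step E hE htne1 hPji hwi1 hmem (hinf s)
    · exact chain_step E hE htne2 hPji hwi2 hmem (hinf s)
  have h3 : f ⟨2, by omega⟩ ∈ progeny E i1 ∨ f ⟨2, by omega⟩ ∈ progeny E i2 := by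
    have hne1' := hne1 ⟨2, by omega⟩ (by simp)
    have hne2' := hne2 ⟨2, by omega⟩ (by simp)
    exact influential_mem E hE (hi1 _ hne1') (hi2 _ hne1' hne2') h12 (hinf _)
  rcases h3 with h3 | h3
  · exact Or.inl ⟨h3, hchain⟩
  · exact Or.inr ⟨h3, hchain⟩
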